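/- A bridging arc π[j_∂′, x_∂] of the annulus P_{g,h} is preinjective if and only if there exists an integer k with j ≤ k·h − 2 and x ≥ (k−1)·g + 2. -/

import Mathlib

/-- Shift the first entry of every point of `A` by `d` (well defined on arcs, since it
commutes with the deck transformations). -/
def shiftFst (d : ℤ) (A : Set (ℤ × ℤ)) : Set (ℤ × ℤ) := (fun p => (p.1 + d, p.2)) '' A

/-- Shift the second entry of every point of `A` by `d` (well defined on arcs). -/
def shiftSnd (d : ℤ) (A : Set (ℤ × ℤ)) : Set (ℤ × ℤ) := (fun p => (p.1, p.2 + d)) '' A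

/-- The bridging arc `π[j_∂', x_∂]` of the annulus `P_{g,h}`, from the inner boundary `∂'`
to the outer boundary `∂`: the orbit of `(j, x) ∈ ℤ × ℤ` under `σ·(j,x) = (j+h, x+g)`. -/
def orbPI (g h j x : ℤ) : Set (ℤ × ℤ) := {q : ℤ × ℤ | ∃ k : ℤ, q = (j + k * h, x + k * g)}

/-- Elementary moves between bridging arcs from `∂'` to `∂`:
`π[j_∂', x_∂] → π[(j+1)_∂', x_∂]` and `π[j_∂', x_∂] → π[j_∂', (x-1)_∂]`. -/
def elemPI (A B : Set (ℤ × ℤ)) : Prop := B = shiftFst 1 A ∨ B = shiftSnd (-1) A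

/-- The injective arcs: `γ_i = π[(-2)_∂', (i-g+2)_∂]` for `0 ≤ i ≤ g` and
`γ_i = π[(i-g-2)_∂', 2_∂]` for `g < i ≤ n`. -/
def gammaArc (g h i : ℤ) : Set (ℤ × ℤ) :=
  if i ≤ g then orbPI g h (-2) (i - g + 2) else orbPI g h (i - g - 2) 2

/-- A bridging arc from `∂'` to `∂` is preinjective if `γ_0` can be reached from it by a
finite (possibly empty) sequence of elementary moves. -/
def IsPreinj (g h : ℤ) (A : Set (ℤ × ℤ)) : Prop :=
  Relation.ReflTransGen elemPI A (gammaArc g h 0)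

lemma orbPI_shift (g h j x k : ℤ) : orbPI g h (j + k * h) (x + k * g) = orbPI g h j x := by
  ext q
  constructor
  · rintro ⟨m, rfl⟩
    exact ⟨k + m, by simp [Prod.ext_iff]; constructor <;> ring⟩
  · rintro ⟨m, rfl⟩
    exact ⟨m - k, by simp [Prod.ext_iff]; constructor <;> ring⟩

lemma shiftFst_orbPI (g h j x d : ℤ) : shiftFst d (orbPI g h j x) = orbPI g h (j + d) x := by
  ext ⟨a, b⟩
  constructor
  · rintro ⟨p, ⟨k, rfl⟩, hp⟩
    exact ⟨k, by rw [← hp]; simp only [Prod.mk.injEq, and_true]; ring⟩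
  · rintro ⟨k, hk⟩
    refine ⟨(j + k * h, x + k * g), ⟨k, rfl⟩, ?_⟩
    rw [hk]; simp only [Prod.mk.injEq, and_true]; ring

lemma shiftSnd_orbPI (g h j x d : ℤ) : shiftSnd d (orbPI g h j x) = orbPI g h j (x + d) := by
  ext ⟨a, b⟩
  constructor
  · rintro ⟨p, ⟨k, rfl⟩, hp⟩
    exact ⟨k, by rw [← hp]; simp only [Prod.mk.injEq, true_and]; ring⟩
  · rintro ⟨k, hk⟩
    refine ⟨(j + k * h, x + k * g), ⟨k, rfl⟩, ?_⟩
    rw [hk]; simp only [Prod.mk.injEq, true_and]; ring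

lemma reach_fst (g h j x : ℤ) (n : ℕ) :
    Relation.ReflTransGen elemPI (orbPI g h j x) (orbPI g h (j + n) x) := by
  induction n with
  | zero => simpa using Relation.ReflTransGen.refl
  | succ n ih =>
    refine ih.tail (Or.inl ?_)
    rw [shiftFst_orbPI]
    congr 1
    push_cast; ring

lemma reach_snd (g h j x : ℤ) (n : ℕ) :
    Relation.ReflTransGen elemPI (orbPI g h j x) (orbPI g h j (x - n)) := by
  induction n with
  | zero => simpa using Relation.ReflTransGen.refl
  | succ n ih =>
    refine ih.tail (Or.inr ?_)
    rw [shiftSnd_orbPI]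
    congr 1
    push_cast; ring

/-- a bridging arc `π[j_∂', x_∂]` of the annulus `P_{g,h}` is preinjective
if and only if there exists an integer `k` with `j ≤ k·h - 2` and `x ≥ (k-1)·g + 2`. -/
theorem preinjective_iff (g h : ℤ) (hh : 1 ≤ h) (hgh : h ≤ g) (j x : ℤ) :
    IsPreinj g h (orbPI g h j x) ↔ ∃ k : ℤ, j ≤ k * h - 2 ∧ (k - 1) * g + 2 ≤ x := by
  have hg : 1 ≤ g := le_trans hh hgh
  have hgamma : gammaArc g h 0 = orbPI g h (-2) (2 - g) := by
    rw [gammaArc, if_pos (by omega)]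
    congr 1; ring
  constructor
  · intro hP
    unfold IsPreinj at hP
    have key : ∀ A, Relation.ReflTransGen elemPI A (gammaArc g h 0) →
        ∀ j x, A = orbPI g h j x → ∃ k : ℤ, j ≤ k * h - 2 ∧ (k - 1) * g + 2 ≤ x := by
      intro A hA
      induction hA using Relation.ReflTransGen.head_induction_on with
      | refl =>
        intro j x hEq
        rw [hgamma] at hEq
        have hm : (j, x) ∈ orbPI g h (-2) (2 - g) := by
          rw [hEq]; exact ⟨0, by simp⟩
        obtain ⟨k, hk⟩ := hm
        simp only [Prod.mk.injEq] at hk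
        have hr : (k - 1) * g = k * g - g := by ring
        exact ⟨k, by linarith [hk.1], by linarith [hk.2]⟩
      | head hstep hrest ih =>
        intro j x hEq
        subst hEq
        rcases hstep with hB | hB
        · rw [hB, shiftFst_orbPI] at ih
          obtain ⟨k, hk1, hk2⟩ := ih (j + 1) x rfl
          exact ⟨k, by omega, hk2⟩
        · rw [hB, shiftSnd_orbPI] at ih
          obtain ⟨k, hk1, hk2⟩ := ih j (x + -1) rfl
          exact ⟨k, hk1, by omega⟩
    exact key _ hP j x rfl
  · rintro ⟨k, hk1, hk2⟩
    unfold IsPreinj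
    have h1 := reach_fst g h j x (k * h - 2 - j).toNat
    have h2 := reach_snd g h (k * h - 2) x (x - ((k - 1) * g + 2)).toNat
    rw [Int.toNat_of_nonneg (by omega)] at h1
    rw [Int.toNat_of_nonneg (by omega)] at h2
    have e1 : j + (k * h - 2 - j) = k * h - 2 := by ring
    rw [e1] at h1
    have e2 : x - (x - ((k - 1) * g + 2)) = (k - 1) * g + 2 := by ring
    rw [e2] at h2
    refine (h1.trans h2).trans ?_
    rw [hgamma]
    have : orbPI g h (k * h - 2) ((k - 1) * g + 2) = orbPI g h (-2 + k * h) ((2 - g) + k * g) := by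
      congr 1 <;> ring
    rw [this, orbPI_shift]
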